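/- Let p be an odd prime, n = 2m even, and f : F_p^n → F_p a function. Suppose V is an m-dimensional subspace of F_p^n whose orthogonal complement V^⊥ (with respect to a fixed nondegenerate bilinear form) is supplementary to V, such that all second-order derivatives D_{c,d} f(x) = f(x+c+d) - f(x+c) - f(x+d) + f(x) vanish identically for c, d ∈ V, and all first-order derivatives D_c f(x) = f(x+c) - f(x) are balanced on F_p^n for every nonzero c ∈ V. Then for every b ∈ F_p^n, the Walsh coefficient S_f(b) = Σ_{x} ω^{f(x) - b·x} satisfies |S_f(b)|^2 = p^n, where ω = e^{2πi/p}; that is, f is a bent function. -/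

import Mathlib

open Finset

section Aux

variable {p : ℕ} [Fact p.Prime]

lemma aux_e_ne_one : (ZMod.stdAddChar (N := p)) ≠ 1 := by
  intro h
  have h1 : (ZMod.stdAddChar (N := p)) 1 = 1 := by rw [h]; rfl
  have h0 : (ZMod.stdAddChar (N := p)) 0 = 1 := AddChar.map_zero_eq_one _
  have := ZMod.injective_stdAddChar (h1.trans h0.symm)
  exact one_ne_zero this

lemma aux_charSum {G : Type*} [AddCommGroup G] [Fintype G] (L : G →+ ZMod p) :
    ∑ v : G, ZMod.stdAddChar (L v)
      = if ∀ v, L v = 0 then (Fintype.card G : ℂ) else 0 := by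
  split_ifs with h
  · simp [h]
  · push_neg at h
    obtain ⟨v, hv⟩ := h
    have hne : (ZMod.stdAddChar (N := p)).compAddMonoidHom L ≠ 1 := by
      intro hL
      apply hv
      have h1 : ZMod.stdAddChar (L v) = 1 := by
        have := congrArg (fun ψ : AddChar G ℂ => ψ v) hL
        simpa using this
      have h0 : ZMod.stdAddChar (0 : ZMod p) = 1 := AddChar.map_zero_eq_one _
      exact ZMod.injective_stdAddChar (h1.trans h0.symm)
    simpa using AddChar.sum_eq_zero_of_ne_one hne

end Aux

/-- bentness criterion via derivatives on a subspace with
supplementary orthogonal complement. -/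
theorem bentness_criterion
    (p : ℕ) [Fact p.Prime] (hp : Odd p)
    (m n : ℕ) (hn : n = 2 * m)
    (f : (Fin n → ZMod p) → ZMod p)
    (V Vp : Submodule (ZMod p) (Fin n → ZMod p))
    (hdim : Module.finrank (ZMod p) V = m)
    (hVp : ∀ y : Fin n → ZMod p, y ∈ Vp ↔ ∀ v ∈ V, (∑ i, v i * y i) = 0)
    (hsupp : IsCompl V Vp)
    (hsecond : ∀ c ∈ V, ∀ d ∈ V, ∀ x : Fin n → ZMod p,
      f (x + c + d) - f (x + c) - f (x + d) + f x = 0)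
    (hbal : ∀ c ∈ V, c ≠ 0 → ∀ t : ZMod p,
      (Finset.univ.filter (fun x : Fin n → ZMod p => f (x + c) - f x = t)).card = p ^ (n - 1)) :
    ∀ b : Fin n → ZMod p,
      ‖(∑ x : Fin n → ZMod p,
        Complex.exp (2 * Real.pi * Complex.I * ((f x - ∑ i, b i * x i).val : ℕ) / p))‖ ^ 2
        = p ^ n := by
  classical
  intro b
  set e : AddChar (ZMod p) ℂ := ZMod.stdAddChar with he
  have hpne : (p : ℂ) ≠ 0 := Nat.cast_ne_zero.mpr (Fact.out : p.Prime).ne_zero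
  have hpmne : ((p : ℂ) ^ m) ≠ 0 := pow_ne_zero _ hpne
  -- the linear functional x ↦ b · x
  have hBadd : ∀ x y : Fin n → ZMod p,
      (∑ i, b i * (x + y) i) = (∑ i, b i * x i) + (∑ i, b i * y i) := by
    intro x y
    simp [Pi.add_apply, mul_add, Finset.sum_add_distrib]
  set B : (Fin n → ZMod p) →+ ZMod p :=
    AddMonoidHom.mk' (fun x => ∑ i, b i * x i) hBadd with hBdef
  -- rewrite the goal sum in terms of the standard character
  have hrw : (∑ x : Fin n → ZMod p,
      Complex.exp (2 * Real.pi * Complex.I * ((f x - ∑ i, b i * x i).val : ℕ) / p))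
      = ∑ x : Fin n → ZMod p, e (f x - B x) := by
    refine Finset.sum_congr rfl fun x _ => ?_
    rw [he, ZMod.stdAddChar_apply, ZMod.toCircle_apply]
    norm_num [hBdef]
  rw [hrw]
  -- cardinalities
  have hfinrank : Module.finrank (ZMod p) (Fin n → ZMod p) = n := by
    simp [Module.finrank_fintype_fun_eq_card]
  have hdimVp : Module.finrank (ZMod p) Vp = m := by
    have h := Submodule.finrank_add_eq_of_isCompl hsupp
    rw [hfinrank, hdim] at h
    omega
  have hcardV : (Fintype.card V : ℂ) = (p : ℂ) ^ m := by
    rw [Module.card_eq_pow_finrank (K := ZMod p) (V := V), hdim, ZMod.card]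
    push_cast; ring
  have hcardVp : (Fintype.card Vp : ℂ) = (p : ℂ) ^ m := by
    rw [Module.card_eq_pow_finrank (K := ZMod p) (V := Vp), hdimVp, ZMod.card]
    push_cast; ring
  -- decomposition of sums via the complement
  have hdecomp : ∀ g : (Fin n → ZMod p) → ℂ,
      ∑ x : Fin n → ZMod p, g x = ∑ u : Vp, ∑ v : V, g (↑u + ↑v) := by
    intro g
    rw [← Equiv.sum_comp (Submodule.prodEquivOfIsCompl V Vp hsupp).toEquiv g,
      Fintype.sum_prod_type, Finset.sum_comm]
    refine Finset.sum_congr rfl fun u _ => Finset.sum_congr rfl fun v _ => ?_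
    simp [Submodule.coe_prodEquivOfIsCompl', add_comm]
  -- additivity of the derivative in the direction of V
  have hΦadd : ∀ u : Fin n → ZMod p, ∀ v ∈ V, ∀ w ∈ V,
      f (u + (v + w)) - f u = (f (u + v) - f u) + (f (u + w) - f u) := by
    intro u v hv w hw
    have h := hsecond v hv w hw u
    rw [← add_assoc]
    linear_combination h
  set Φ : (Fin n → ZMod p) → (V →+ ZMod p) := fun u =>
    AddMonoidHom.mk' (fun v : V => f (u + ↑v) - f u)
      (fun v w => by
        have := hΦadd u ↑v v.2 ↑w w.2
        simpa using this) with hΦdef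
  have hΦapp : ∀ u : Fin n → ZMod p, ∀ v : V, Φ u v = f (u + ↑v) - f u := fun _ _ => rfl
  set BV : (V : Submodule (ZMod p) (Fin n → ZMod p)) →+ ZMod p :=
    B.comp V.subtype.toAddMonoidHom with hBVdef
  -- sum of the character over ZMod p vanishes
  have hsum_e : ∑ t : ZMod p, e t = 0 := AddChar.sum_eq_zero_of_ne_one aux_e_ne_one
  -- balancedness: character sums of derivatives vanish
  have hbal' : ∀ v : V, (↑v : Fin n → ZMod p) ≠ 0 →
      ∑ x : Fin n → ZMod p, e (f (x + ↑v) - f x) = 0 := by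
    intro v hv
    rw [← Finset.sum_fiberwise_of_maps_to
      (g := fun x : Fin n → ZMod p => f (x + ↑v) - f x) (t := Finset.univ)
      (fun x _ => Finset.mem_univ _) (fun x => e (f (x + ↑v) - f x))]
    have : ∀ t : ZMod p, ∑ x ∈ Finset.univ.filter
        (fun x : Fin n → ZMod p => f (x + ↑v) - f x = t), e (f (x + ↑v) - f x)
        = (p ^ (n-1) : ℂ) * e t := by
      intro t
      rw [Finset.sum_congr rfl (fun x hx => by rw [(Finset.mem_filter.mp hx).2]),
        Finset.sum_const, hbal ↑v v.2 hv t, nsmul_eq_mul]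
      push_cast; ring
    rw [Finset.sum_congr rfl (fun t _ => this t), ← Finset.mul_sum, hsum_e, mul_zero]
  -- key: for nonzero v in V the character sum of Φ · v over Vp vanishes
  have hkey : ∀ v : V, (↑v : Fin n → ZMod p) ≠ 0 → ∑ u : Vp, e (Φ ↑u v) = 0 := by
    intro v hv
    have h1 : ∑ x : Fin n → ZMod p, e (f (x + ↑v) - f x)
        = ∑ u : Vp, ∑ w : V, e (Φ ↑u v) := by
      rw [hdecomp (fun x => e (f (x + ↑v) - f x))]
      refine Finset.sum_congr rfl fun u _ => Finset.sum_congr rfl fun w _ => ?_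
      congr 1
      have hadd := hΦadd ↑u ↑w w.2 ↑v v.2
      have : (↑u + ↑w + ↑v : Fin n → ZMod p) = ↑u + (↑w + ↑v) := by ring
      rw [hΦapp, this]
      linear_combination hadd
    rw [hbal' v hv] at h1
    have h2 : ∑ u : Vp, ∑ w : V, e (Φ ↑u v)
        = (p : ℂ) ^ m * ∑ u : Vp, e (Φ ↑u v) := by
      rw [Finset.mul_sum]
      refine Finset.sum_congr rfl fun u _ => ?_
      rw [Finset.sum_const, Finset.card_univ, nsmul_eq_mul, hcardV]
    rw [h2] at h1
    exact (mul_eq_zero.mp h1.symm).resolve_left hpmne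
  -- inner character sums over V
  have hinner : ∀ u : Fin n → ZMod p,
      ∑ v : V, e (Φ u v - BV v)
        = if (∀ v : V, Φ u v = BV v) then ((p : ℂ) ^ m) else 0 := by
    intro u
    have := aux_charSum (Φ u - BV)
    simp only [AddMonoidHom.sub_apply, sub_eq_zero] at this
    rw [this]
    split_ifs with h
    · rw [hcardV]
    · rfl
  -- the count of "good" u in Vp
  set T : Finset Vp := Finset.univ.filter (fun u : Vp => ∀ v : V, Φ ↑u v = BV v) with hT
  have hcount : (T.card : ℂ) * (p : ℂ) ^ m = (p : ℂ) ^ m := by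
    have hC1 : ∑ u : Vp, ∑ v : V, e (Φ ↑u v - BV v) = (T.card : ℂ) * (p : ℂ) ^ m := by
      calc ∑ u : Vp, ∑ v : V, e (Φ ↑u v - BV v)
          = ∑ u : Vp, (if (∀ v : V, Φ ↑u v = BV v) then ((p : ℂ) ^ m) else 0) :=
            Finset.sum_congr rfl fun u _ => hinner ↑u
        _ = ∑ _u ∈ T, (p : ℂ) ^ m := (Finset.sum_filter _ _).symm
        _ = (T.card : ℂ) * (p : ℂ) ^ m := by rw [Finset.sum_const, nsmul_eq_mul]
    have hC2 : ∑ u : Vp, ∑ v : V, e (Φ ↑u v - BV v) = (p : ℂ) ^ m := by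
      rw [Finset.sum_comm]
      have hterm : ∀ v : V, ∑ u : Vp, e (Φ ↑u v - BV v)
          = e (- BV v) * ∑ u : Vp, e (Φ ↑u v) := by
        intro v
        rw [Finset.mul_sum]
        refine Finset.sum_congr rfl fun u _ => ?_
        rw [sub_eq_neg_add, AddChar.map_add_eq_mul]
      rw [Finset.sum_congr rfl fun v _ => hterm v]
      rw [Finset.sum_eq_single 0]
      · simp [hcardVp]
      · intro v _ hv
        have hv' : (↑v : Fin n → ZMod p) ≠ 0 := by
          simpa [Submodule.coe_eq_zero] using hv
        rw [hkey v hv', mul_zero]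
      · intro h; exact absurd (Finset.mem_univ 0) h
    rw [← hC1, hC2]
  have hTcard : T.card = 1 := by
    have : (T.card : ℂ) = 1 := by
      field_simp at hcount
      exact_mod_cast hcount
    exact_mod_cast this
  obtain ⟨u0, hu0⟩ := Finset.card_eq_one.mp hTcard
  -- compute the full sum
  have hS : ∑ x : Fin n → ZMod p, e (f x - B x)
      = (p : ℂ) ^ m * e (f ↑u0 - B ↑u0) := by
    rw [hdecomp (fun x => e (f x - B x))]
    have hterm : ∀ u : Vp, ∀ v : V,
        e (f (↑u + ↑v) - B (↑u + ↑v)) = e (f ↑u - B ↑u) * e (Φ ↑u v - BV v) := by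
      intro u v
      rw [← AddChar.map_add_eq_mul]
      congr 1
      rw [hΦapp]
      have : B (↑u + ↑v) = B ↑u + B ↑v := map_add B _ _
      have hBV : BV v = B ↑v := rfl
      rw [this, hBV]
      ring
    calc ∑ u : Vp, ∑ v : V, e (f (↑u + ↑v) - B (↑u + ↑v))
        = ∑ u : Vp, e (f ↑u - B ↑u) * ∑ v : V, e (Φ ↑u v - BV v) := by
          refine Finset.sum_congr rfl fun u _ => ?_
          rw [Finset.mul_sum]
          exact Finset.sum_congr rfl fun v _ => hterm u v
      _ = ∑ u : Vp, e (f ↑u - B ↑u) *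
            (if (∀ v : V, Φ ↑u v = BV v) then ((p : ℂ) ^ m) else 0) := by
          exact Finset.sum_congr rfl fun u _ => by rw [hinner]
      _ = ∑ u ∈ T, e (f ↑u - B ↑u) * (p : ℂ) ^ m := by
          rw [hT, Finset.sum_filter]
          refine Finset.sum_congr rfl fun u _ => ?_
          split_ifs <;> simp
      _ = (p : ℂ) ^ m * e (f ↑u0 - B ↑u0) := by
          rw [hu0, Finset.sum_singleton, mul_comm]
  rw [hS]
  have habs : ‖e (f ↑u0 - B ↑u0)‖ = 1 := by
    rw [he, ZMod.stdAddChar_apply]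
    exact Circle.norm_coe _
  rw [norm_mul, habs, mul_one]
  rw [norm_pow, Complex.norm_natCast]
  rw [← pow_mul]
  rw [hn]
  ring
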